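/- arXiv:1607.08601 — 2 statements merged into one kernel-verified Lean document; each statement's English description precedes it below -/
import Mathlib

section
/- With ν, π, B, Δ̃, μ as before and z_k as before, one has (1/μ_k²) tr( Δ̃^{-2} ν (diag(π) diag(μ)^{-1} diag(z_k)) 1 ν_kᵀ ) = (1/(π_k μ_k)) ∑_l B_{kl}(1−B_{kl}) B^{-1}_{kl}. -/
open Matrix

lemma trace_mul_vecMulVec_aux {d : ℕ} (M : Matrix (Fin d) (Fin d) ℝ) (w v : Fin d → ℝ) :
    Matrix.trace (M * Matrix.vecMulVec w v) = v ⬝ᵥ (M *ᵥ w) := by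
  simp only [Matrix.trace, Matrix.diag, Matrix.mul_apply, Matrix.vecMulVec_apply,
    Matrix.mulVec, dotProduct, Finset.mul_sum]
  exact Finset.sum_congr rfl fun i _ => Finset.sum_congr rfl fun j _ => by ring

/-- LSE within-block variance identity (cross term): with `B = νᵀν`,
`μ_k = ∑_l π_l B_{kl} > 0`, `Δ̃ = ν diag(π) diag(μ)⁻¹ νᵀ`, `z_k(l) = B_{kl}(1−B_{kl})`
and `𝟙` the all-ones vector,
`(1/μ_k²) tr(Δ̃^{-2} ν (diag(π) diag(μ)^{-1} diag(z_k)) 𝟙 ν_kᵀ)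
  = (1/(π_k μ_k)) ∑_l B_{kl}(1−B_{kl}) B^{-1}_{kl}`. -/
theorem lse_within_block_variance_identity_cross {d : ℕ}
    (ν : Matrix (Fin d) (Fin d) ℝ) (hν : IsUnit ν.det)
    (π : Fin d → ℝ) (hπ : ∀ l, 0 < π l) (k : Fin d)
    (μ : Fin d → ℝ) (hμdef : ∀ l, μ l = ∑ l', π l' * (νᵀ * ν) l l')
    (hμpos : ∀ l, 0 < μ l)
    (hΔ : IsUnit (ν * (Matrix.diagonal π * (Matrix.diagonal μ)⁻¹) * νᵀ).det) :
    let B := νᵀ * ν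
    let Δt := ν * (Matrix.diagonal π * (Matrix.diagonal μ)⁻¹) * νᵀ
    let z : Fin d → ℝ := fun l => B k l * (1 - B k l)
    let w : Fin d → ℝ :=
      (ν * (Matrix.diagonal π * (Matrix.diagonal μ)⁻¹ * Matrix.diagonal z)) *ᵥ
        (fun _ => 1)
    let νk : Fin d → ℝ := fun i => ν i k
    (1 / (μ k) ^ 2) * Matrix.trace ((Δt⁻¹) ^ 2 * Matrix.vecMulVec w νk) =
      (1 / (π k * μ k)) * ∑ l, B k l * (1 - B k l) * B⁻¹ k l := by
  intro B Δt z w νk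
  set c : Fin d → ℝ := fun l => π l * (μ l)⁻¹ with hcdef
  have hμne : ∀ l, μ l ≠ 0 := fun l => (hμpos l).ne'
  have hπne : ∀ l, π l ≠ 0 := fun l => (hπ l).ne'
  have hcne : ∀ l, c l ≠ 0 := fun l => mul_ne_zero (hπne l) (inv_ne_zero (hμne l))
  have hDμ : (Matrix.diagonal μ)⁻¹ = Matrix.diagonal (fun l => (μ l)⁻¹) := by
    apply Matrix.inv_eq_right_inv
    rw [Matrix.diagonal_mul_diagonal]
    convert Matrix.diagonal_one
    exact mul_inv_cancel₀ (hμne _)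
  have hC : Matrix.diagonal π * (Matrix.diagonal μ)⁻¹ = Matrix.diagonal c := by
    rw [hDμ, Matrix.diagonal_mul_diagonal]
  have hCdet : IsUnit (Matrix.diagonal c).det := by
    rw [Matrix.det_diagonal]
    exact isUnit_iff_ne_zero.mpr (Finset.prod_ne_zero_iff.mpr fun l _ => hcne l)
  have hCinv : (Matrix.diagonal c)⁻¹ = Matrix.diagonal (fun l => (c l)⁻¹) := by
    apply Matrix.inv_eq_right_inv
    rw [Matrix.diagonal_mul_diagonal]
    convert Matrix.diagonal_one
    exact mul_inv_cancel₀ (hcne _)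
  have hνν : ν⁻¹ * ν = 1 := Matrix.nonsing_inv_mul _ hν
  have hCC : (Matrix.diagonal c)⁻¹ * Matrix.diagonal c = 1 :=
    Matrix.nonsing_inv_mul _ hCdet
  have hνinv : ∀ X : Matrix (Fin d) (Fin d) ℝ, ν⁻¹ * (νᵀ⁻¹ * X) = B⁻¹ * X := by
    intro X
    rw [← Matrix.mul_assoc, ← Matrix.mul_inv_rev]
  have cancel1 : ∀ X : Matrix (Fin d) (Fin d) ℝ, ν⁻¹ * (ν * X) = X := by
    intro X; rw [← Matrix.mul_assoc, hνν, Matrix.one_mul]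
  have cancel2 : ∀ X : Matrix (Fin d) (Fin d) ℝ,
      (Matrix.diagonal c)⁻¹ * (Matrix.diagonal c * X) = X := by
    intro X; rw [← Matrix.mul_assoc, hCC, Matrix.one_mul]
  have h1 : Δt⁻¹ = νᵀ⁻¹ * ((Matrix.diagonal c)⁻¹ * ν⁻¹) := by
    show (ν * (Matrix.diagonal π * (Matrix.diagonal μ)⁻¹) * νᵀ)⁻¹ = _
    rw [hC, Matrix.mul_inv_rev, Matrix.mul_inv_rev]
  have key : Δt⁻¹ ^ 2 *
      (ν * (Matrix.diagonal π * (Matrix.diagonal μ)⁻¹ * Matrix.diagonal z)) =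
      νᵀ⁻¹ * ((Matrix.diagonal c)⁻¹ * (B⁻¹ * Matrix.diagonal z)) := by
    rw [pow_two, h1, hC]
    simp only [Matrix.mul_assoc]
    rw [cancel1, cancel2, hνinv]
  have hνkcol : ν *ᵥ Pi.single k 1 = νk := by
    funext i
    simp [Matrix.mulVec_single]
    rfl
  have hνk : ν⁻¹ *ᵥ νk = Pi.single k 1 := by
    rw [← hνkcol, Matrix.mulVec_mulVec, hνν, Matrix.one_mulVec]
  -- compute the trace
  rw [trace_mul_vecMulVec_aux]
  have hw : (Δt⁻¹) ^ 2 *ᵥ w =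
      (νᵀ⁻¹ * ((Matrix.diagonal c)⁻¹ * (B⁻¹ * Matrix.diagonal z))) *ᵥ (fun _ => 1) := by
    show (Δt⁻¹) ^ 2 *ᵥ ((ν * (Matrix.diagonal π * (Matrix.diagonal μ)⁻¹ * Matrix.diagonal z)) *ᵥ
        (fun _ => 1)) = _
    rw [Matrix.mulVec_mulVec, key]
  rw [hw]
  have hdot : νk ⬝ᵥ ((νᵀ⁻¹ * ((Matrix.diagonal c)⁻¹ * (B⁻¹ * Matrix.diagonal z))) *ᵥ
      (fun _ => 1)) =
      Pi.single k 1 ⬝ᵥ (((Matrix.diagonal c)⁻¹ * (B⁻¹ * Matrix.diagonal z)) *ᵥ (fun _ => 1)) := by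
    rw [← Matrix.mulVec_mulVec, Matrix.dotProduct_mulVec, ← Matrix.transpose_nonsing_inv,
      Matrix.vecMul_transpose, hνk]
  rw [hdot]
  have hentry : Pi.single k 1 ⬝ᵥ (((Matrix.diagonal c)⁻¹ * (B⁻¹ * Matrix.diagonal z)) *ᵥ
      (fun _ => 1)) = (c k)⁻¹ * ∑ l, B⁻¹ k l * z l := by
    rw [hCinv, single_dotProduct, one_mul]
    simp only [Matrix.mulVec, dotProduct, Matrix.diagonal_mul, Matrix.mul_diagonal,
      mul_one]
    rw [Finset.mul_sum]
  rw [hentry]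
  rw [← mul_assoc, Finset.mul_sum, Finset.mul_sum]
  refine Finset.sum_congr rfl fun l _ => ?_
  show 1 / μ k ^ 2 * (π k * (μ k)⁻¹)⁻¹ * (B⁻¹ k l * (B k l * (1 - B k l))) =
    1 / (π k * μ k) * (B k l * (1 - B k l) * B⁻¹ k l)
  field_simp [hμne k, hπne k]
end

section
/- Let B = [[α, γ],[γ, δ]] be a symmetric invertible 2×2 matrix, π = (π₁, π₂) with π₁,π₂ > 0 and π₁+π₂=1, and let P = Z B Zᵀ with Z the n×2 indicator matrix with nπ₁ rows (1,0) and nπ₂ rows (0,1). Then n² tr( (P†)² diag(w) ) = tr( (diag(π)^{-1} B^{-1})² diag(α(1−α), δ(1−δ)) ), where diag(w) is the n×n diagonal matrix whose first nπ₁ diagonal entries are α(1−α) and whose remaining diagonal entries are δ(1−δ). -/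
open Matrix

private lemma sum_split_aux (n₁ n₂ : ℕ) (x y : ℝ) :
    ∑ i : Fin (n₁ + n₂), (if (i : ℕ) < n₁ then x else y) = n₁ * x + n₂ * y := by
  rw [Fin.sum_univ_add]
  simp [Fin.castAdd, Fin.natAdd, Nat.not_lt, (Fin.is_lt _), mul_comm]

set_option maxHeartbeats 2000000 in
/-- Two-block trace identity: with `Z` the block indicator matrix (`n₁ = nπ₁` rows
`(1,0)`, `n₂ = nπ₂` rows `(0,1)`), `B = [[α,γ],[γ,δ]]` invertible, `P = ZBZᵀ` and
`P†` its Moore–Penrose pseudoinverse (given explicitly),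
`n² tr((P†)² diag(w)) = tr((diag(π)⁻¹ B⁻¹)² diag(α(1−α), δ(1−δ)))`, where the
first `n₁` diagonal entries of `diag(w)` are `α(1−α)` and the rest are `δ(1−δ)`. -/
theorem two_block_trace_identity (n₁ n₂ : ℕ) (hn₁ : 0 < n₁) (hn₂ : 0 < n₂)
    (α γ δ : ℝ) (hB : IsUnit (Matrix.det !![α, γ; γ, δ])) :
    let n : ℕ := n₁ + n₂
    let π : Fin 2 → ℝ := ![(n₁ : ℝ) / n, (n₂ : ℝ) / n]
    let B : Matrix (Fin 2) (Fin 2) ℝ := !![α, γ; γ, δ]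
    let Z : Matrix (Fin n) (Fin 2) ℝ := fun i j =>
      if (i : ℕ) < n₁ then (if j = 0 then 1 else 0) else (if j = 1 then 1 else 0)
    let D : Matrix (Fin 2) (Fin 2) ℝ := Matrix.diagonal ![(n₁ : ℝ)⁻¹, (n₂ : ℝ)⁻¹]
    let Pdag : Matrix (Fin n) (Fin n) ℝ := Z * D * B⁻¹ * D * Zᵀ
    let w : Fin n → ℝ := fun i =>
      if (i : ℕ) < n₁ then α * (1 - α) else δ * (1 - δ)
    (n : ℝ) ^ 2 * Matrix.trace (Pdag ^ 2 * Matrix.diagonal w) =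
      Matrix.trace (((Matrix.diagonal π)⁻¹ * B⁻¹) ^ 2 *
        Matrix.diagonal ![α * (1 - α), δ * (1 - δ)]) := by
  intro n π B Z D Pdag w
  have hn₁' : (n₁ : ℝ) ≠ 0 := Nat.cast_ne_zero.mpr hn₁.ne'
  have hn₂' : (n₂ : ℝ) ≠ 0 := Nat.cast_ne_zero.mpr hn₂.ne'
  have hn' : (n : ℝ) ≠ 0 := by
    have : 0 < n := Nat.add_pos_left hn₁ n₂
    exact Nat.cast_ne_zero.mpr this.ne'
  have hd : α * δ - γ * γ ≠ 0 := by
    have := hB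
    rw [Matrix.det_fin_two_of] at this
    simpa [isUnit_iff_ne_zero] using this
  have hdet : B.det = α * δ - γ * γ := by simp [B, Matrix.det_fin_two_of]
  have hBinv : B⁻¹ = (α * δ - γ * γ)⁻¹ • !![δ, -γ; -γ, α] := by
    rw [Matrix.inv_def, Matrix.adjugate_fin_two, Ring.inverse_eq_inv', hdet]
    congr 1 <;> simp [B]
  -- compress: Zᵀ * Z and Zᵀ * diag w * Z
  have h1 : Zᵀ * Z = Matrix.diagonal ![(n₁ : ℝ), n₂] := by
    ext a b
    rw [Matrix.mul_apply]
    fin_cases a <;> fin_cases b <;>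
      simp only [Matrix.transpose_apply, Z, Matrix.diagonal] <;>
      simp only [mul_ite, ite_mul, mul_one, mul_zero, one_mul, zero_mul, if_pos, if_neg] <;>
      rw [show (n : ℕ) = n₁ + n₂ from rfl, Fin.sum_univ_add] <;>
      simp [Fin.castAdd, Fin.natAdd, Nat.not_lt, (Fin.is_lt _), Matrix.transpose, Matrix.of_apply, Matrix.mul_apply]
  have h2 : Zᵀ * (Matrix.diagonal w * Z) =
      Matrix.diagonal ![(n₁ : ℝ) * (α * (1 - α)), (n₂ : ℝ) * (δ * (1 - δ))] := by
    ext a b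
    rw [Matrix.mul_apply]
    simp only [Matrix.diagonal_mul, Matrix.transpose_apply]
    simp only [Matrix.diagonal_mul, Matrix.transpose_apply, Z, w]
    fin_cases a <;> fin_cases b <;>
      simp only [Matrix.diagonal] <;>
      rw [show (n : ℕ) = n₁ + n₂ from rfl, Fin.sum_univ_add] <;>
      simp [Fin.castAdd, Fin.natAdd, Nat.not_lt, (Fin.is_lt _), Matrix.transpose, Matrix.of_apply, Matrix.mul_apply, n]
  have htr : Matrix.trace (Pdag ^ 2 * Matrix.diagonal w) =
      Matrix.trace (D * (B⁻¹ * (D * (Matrix.diagonal ![(n₁ : ℝ), n₂] *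
        (D * (B⁻¹ * (D * Matrix.diagonal ![(n₁ : ℝ) * (α * (1 - α)),
          (n₂ : ℝ) * (δ * (1 - δ))]))))))) := by
    rw [pow_two]
    simp only [Pdag]
    simp only [Matrix.mul_assoc]
    rw [Matrix.trace_mul_comm Z]
    simp only [Matrix.mul_assoc]
    rw [← Matrix.mul_assoc Zᵀ Z, h1, h2]
  have hπne : ∀ i, π i ≠ 0 := by
    intro i; fin_cases i <;> simp [π, div_eq_zero_iff, hn₁', hn₂', hn']
  have hπ : (Matrix.diagonal π)⁻¹ = Matrix.diagonal (fun i => (π i)⁻¹) := by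
    apply Matrix.inv_eq_right_inv
    rw [Matrix.diagonal_mul_diagonal]
    have hc : ∀ i, π i * (π i)⁻¹ = 1 := fun i => mul_inv_cancel₀ (hπne i)
    simp [hc, Matrix.diagonal_one]
  rw [htr, hBinv, hπ]
  simp only [Matrix.trace_fin_two, Matrix.mul_apply, Fin.sum_univ_two, pow_two,
    Matrix.diagonal_apply, Matrix.smul_apply, smul_eq_mul, Matrix.cons_val', Matrix.cons_val_zero,
    Matrix.cons_val_one, Matrix.head_cons, Matrix.empty_val', Matrix.cons_val_fin_one,
    Matrix.of_apply, D, π, Pi.inv_apply, Fin.isValue]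
  norm_num
  field_simp
end
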